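/- Assume the Riemann Hypothesis. Then for every integer r ≥ 2, the error term Δ_r(x) = Σ_{n≤x} G_r(n) − x^r/r! − H_r(x) satisfies Δ_r(x) = Ω(x^{r−1}); that is, limsup_{x→∞} |Δ_r(x)|/x^{r−1} > 0. -/

import Mathlib

open Complex Filter

/-- `G r n = ∑_{k₁+⋯+k_r = n, kᵢ ≥ 1} Λ(k₁)⋯Λ(k_r)` where `Λ` is the von Mangoldt function. -/
noncomputable def G (r n : ℕ) : ℝ :=
  ∑ k ∈ (Fintype.piFinset fun _ : Fin r => Finset.Icc 1 n).filter
      (fun k => ∑ i, k i = n),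
    ∏ i, ArithmeticFunction.vonMangoldt (k i)

open Classical in
/-- The multiplicity of a point as a zero of the Riemann zeta function. -/
noncomputable def zetaMult (ρ : ℂ) : ℕ :=
  if h : AnalyticAt ℂ riemannZeta ρ then (analyticOrderAt riemannZeta ρ).toNat else 0

/-- `Hr r x = -r ∑_ρ x^(r-1+ρ) / (ρ(1+ρ)⋯(r-1+ρ))`, summed over the nontrivial zeros
of `ζ` counted with multiplicity. -/
noncomputable def Hr (r : ℕ) (x : ℝ) : ℂ :=
  -(r : ℂ) * ∑' ρ : {ρ : ℂ // riemannZeta ρ = 0 ∧ 0 < ρ.re ∧ ρ.re < 1},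
    (zetaMult ρ : ℂ) * (x : ℂ) ^ ((r : ℂ) - 1 + (ρ : ℂ)) /
      ∏ j ∈ Finset.range r, ((j : ℂ) + (ρ : ℂ))

/-- The error term `Δ_r(x) = ∑_{n ≤ x} G_r(n) - x^r/r! - H_r(x)`. -/
noncomputable def Delta (r : ℕ) (x : ℝ) : ℂ :=
  (∑ n ∈ Finset.range (⌊x⌋₊ + 1), (G r n : ℂ)) - (x : ℂ) ^ r / (r.factorial : ℂ) - Hr r x

/- ### Auxiliary material -/

open Topology

abbrev ZS : Type := {ρ : ℂ // riemannZeta ρ = 0 ∧ 0 < ρ.re ∧ ρ.re < 1}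

noncomputable def fTerm (r : ℕ) (x : ℝ) (ρ : ZS) : ℂ :=
  (zetaMult ρ : ℂ) * (x : ℂ) ^ ((r : ℂ) - 1 + (ρ : ℂ)) /
      ∏ j ∈ Finset.range r, ((j : ℂ) + (ρ : ℂ))

noncomputable def gTerm (r : ℕ) (ρ : ZS) : ℝ :=
  (zetaMult ρ : ℝ) / ∏ j ∈ Finset.range r, ‖(j : ℂ) + (ρ : ℂ)‖

noncomputable def FF (r N : ℕ) : ℝ := ∑ n ∈ Finset.range (N + 1), G r n

lemma G_nonneg (r n : ℕ) : 0 ≤ G r n :=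
  Finset.sum_nonneg fun _ _ => Finset.prod_nonneg fun _ _ =>
    ArithmeticFunction.vonMangoldt_nonneg

lemma gTerm_nonneg (r : ℕ) (ρ : ZS) : 0 ≤ gTerm r ρ :=
  div_nonneg (Nat.cast_nonneg _) (Finset.prod_nonneg fun _ _ => norm_nonneg _)

lemma Hr_eq (r : ℕ) (x : ℝ) : Hr r x = -(r : ℂ) * ∑' ρ : ZS, fTerm r x ρ := rfl

lemma re_half (hRH : RiemannHypothesis) (ρ : ZS) : (ρ : ℂ).re = 1 / 2 := by
  obtain ⟨ρ, h0, h1, h2⟩ := ρ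
  refine hRH ρ h0 ?_ ?_
  · rintro ⟨n, hn⟩
    have he : (-2 * ((n : ℕ) + 1) : ℂ) = (((-2 * ((n : ℝ) + 1)) : ℝ) : ℂ) := by push_cast; ring
    rw [hn, he, Complex.ofReal_re] at h1
    have : (0:ℝ) ≤ (n : ℝ) := Nat.cast_nonneg n
    nlinarith
  · rintro rfl
    simp at h2

lemma abs_fTerm (hRH : RiemannHypothesis) (r : ℕ) {x : ℝ} (hx : 0 < x) (ρ : ZS) :
    ‖fTerm r x ρ‖ = x ^ ((r : ℝ) - 1 / 2) * gTerm r ρ := by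
  have hre : ((r : ℂ) - 1 + (ρ : ℂ)).re = (r : ℝ) - 1 / 2 := by
    simp [Complex.add_re, Complex.sub_re, re_half hRH ρ]
    ring
  rw [fTerm, gTerm, norm_div, norm_mul, Complex.norm_natCast,
    Complex.norm_cpow_eq_rpow_re_of_pos hx, hre, Complex.norm_prod]
  ring

lemma summable_fTerm_iff (hRH : RiemannHypothesis) (r : ℕ) {x : ℝ} (hx : 0 < x) :
    Summable (fTerm r x) ↔ Summable (gTerm r) := by
  rw [← summable_norm_iff]
  simp_rw [abs_fTerm hRH r hx]
  exact summable_mul_left_iff (ne_of_gt (Real.rpow_pos_of_pos hx _))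

lemma key (hRH : RiemannHypothesis) (r : ℕ) (hr : 2 ≤ r) :
    ∃ C : ℝ, 0 ≤ C ∧
      (∀ x : ℝ, 1 ≤ x → ‖Hr r x‖ ≤ C * x ^ ((r : ℝ) - 1 / 2)) ∧
      (∀ n : ℕ, 2 ≤ n → Tendsto (Hr r) (𝓝[<] (n : ℝ)) (𝓝 (Hr r (n : ℝ)))) := by
  have he0 : (0:ℝ) ≤ (r : ℝ) - 1 / 2 := by
    have : (2:ℝ) ≤ r := by exact_mod_cast hr
    linarith
  by_cases hs : Summable (gTerm r)
  · refine ⟨r * ∑' ρ, gTerm r ρ, mul_nonneg (Nat.cast_nonneg _) (tsum_nonneg (gTerm_nonneg r)), ?_, ?_⟩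
    · intro x hx
      have hx0 : (0:ℝ) < x := lt_of_lt_of_le one_pos hx
      have hnorm : Summable (fun ρ : ZS => ‖fTerm r x ρ‖) := by
        simp_rw [abs_fTerm hRH r hx0]
        exact hs.mul_left _
      calc ‖Hr r x‖ = r * ‖∑' ρ : ZS, fTerm r x ρ‖ := by
            rw [Hr_eq, norm_mul]; simp
        _ ≤ r * ∑' ρ : ZS, ‖fTerm r x ρ‖ := by
            have h := norm_tsum_le_tsum_norm hnorm
            exact mul_le_mul_of_nonneg_left h (Nat.cast_nonneg r)
        _ = r * (x ^ ((r:ℝ) - 1/2) * ∑' ρ : ZS, gTerm r ρ) := by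
            simp_rw [abs_fTerm hRH r hx0]
            rw [tsum_mul_left]
        _ = (r * ∑' ρ : ZS, gTerm r ρ) * x ^ ((r:ℝ) - 1/2) := by ring
    · intro n hn
      have hn2 : (2:ℝ) ≤ (n:ℝ) := by exact_mod_cast hn
      have hcont : ContinuousOn (fun x : ℝ => ∑' ρ : ZS, fTerm r x ρ) (Set.Icc 1 (n:ℝ)) := by
        refine continuousOn_tsum (u := fun ρ => (n:ℝ) ^ ((r:ℝ) - 1/2) * gTerm r ρ)
          ?_ (hs.mul_left _) ?_
        · intro ρ
          simp only [fTerm]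
          refine (continuousOn_const.mul ?_).div_const _
          intro x hx
          have hx0 : (0:ℝ) < x := lt_of_lt_of_le one_pos hx.1
          have hca : ContinuousAt (fun z : ℂ => z ^ ((r:ℂ) - 1 + (ρ:ℂ))) (x:ℂ) :=
            continuousAt_cpow_const (Or.inl (by simpa using hx0))
          exact (hca.comp Complex.continuous_ofReal.continuousAt).continuousWithinAt
        · intro ρ x hx
          rw [abs_fTerm hRH r (lt_of_lt_of_le one_pos hx.1)]
          have hle : x ^ ((r:ℝ) - 1/2) ≤ (n:ℝ) ^ ((r:ℝ) - 1/2) :=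
            Real.rpow_le_rpow (by linarith [hx.1]) hx.2 he0
          exact mul_le_mul_of_nonneg_right hle (gTerm_nonneg r ρ)
      have hsub : Set.Ioo ((n:ℝ)-1) (n:ℝ) ⊆ Set.Icc 1 (n:ℝ) :=
        fun x hx => ⟨by linarith [hx.1], hx.2.le⟩
      have hmem : (n:ℝ) ∈ Set.Icc 1 (n:ℝ) := ⟨by linarith, le_refl _⟩
      have h2 := hcont.continuousWithinAt hmem
      have h3 := h2.mono_left (nhdsWithin_mono _ hsub)
      rw [← nhdsWithin_Ioo_eq_nhdsLT (show (n:ℝ)-1 < (n:ℝ) by linarith)]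
      simp only [Hr_eq]
      exact tendsto_const_nhds.mul h3
  · have hzero : ∀ x : ℝ, 0 < x → Hr r x = 0 := by
      intro x hx
      rw [Hr_eq, tsum_eq_zero_of_not_summable
        (fun hsum => hs ((summable_fTerm_iff hRH r hx).mp hsum)), mul_zero]
    refine ⟨0, le_refl _, ?_, ?_⟩
    · intro x hx
      rw [hzero x (by linarith), norm_zero, zero_mul]
    · intro n hn
      have hn2 : (2:ℝ) ≤ (n:ℝ) := by exact_mod_cast hn
      have hev : (fun _ : ℝ => (0:ℂ)) =ᶠ[𝓝[<] (n:ℝ)] Hr r := by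
        filter_upwards [Ioo_mem_nhdsLT_of_mem
          (show (n:ℝ) ∈ Set.Ioc ((n:ℝ) - 1) (n:ℝ) from ⟨by linarith, le_refl _⟩)] with x hx
        exact (hzero x (by have := hx.1; linarith)).symm
      rw [hzero (n:ℝ) (by linarith)]
      exact tendsto_const_nhds.congr' hev

/-- Under RH, `Δ_r(x) = Ω(x^(r-1))`, i.e. `limsup_{x → ∞} |Δ_r(x)|/x^(r-1) > 0`. -/
theorem stmt_7 (hRH : RiemannHypothesis) (r : ℕ) (hr : 2 ≤ r) :
    0 < Filter.limsup
      (fun x : ℝ => ((‖Delta r x‖ / x ^ (r - 1) : ℝ) : EReal)) atTop := by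
  by_contra hcon
  push_neg at hcon
  obtain ⟨q, hq⟩ : ∃ q, r = q + 1 := ⟨r - 1, by omega⟩
  have hq1 : 1 ≤ q := by omega
  have hq' : r - 1 = q := by omega
  set K : ℝ := (r.factorial : ℝ) with hK
  have hK0 : (0:ℝ) < K := by rw [hK]; exact_mod_cast r.factorial_pos
  set ε : ℝ := 1 / (4 * K) with hε
  have hε0 : (0:ℝ) < ε := by rw [hε]; positivity
  obtain ⟨C, hC0, hCb, hCt⟩ := key hRH r hr
  -- from limsup ≤ 0 : eventual bound
  have hlt : Filter.limsup
      (fun x : ℝ => ((‖Delta r x‖ / x ^ (r - 1) : ℝ) : EReal)) atTop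
      < ((ε : ℝ) : EReal) :=
    lt_of_le_of_lt hcon (by exact_mod_cast hε0)
  have hev := eventually_lt_of_limsup_lt hlt
  rw [eventually_atTop] at hev
  obtain ⟨X₀, hX₀⟩ := hev
  have hbound : ∀ x : ℝ, 1 ≤ x → X₀ ≤ x → ‖Delta r x‖ ≤ ε * x ^ q := by
    intro x h1 h2
    have h3 := hX₀ x h2
    rw [EReal.coe_lt_coe_iff, hq'] at h3
    have hxp : (0:ℝ) < x ^ q := pow_pos (by linarith) q
    nlinarith [(div_lt_iff₀ hxp).mp h3]
  -- choose M
  obtain ⟨M, hM⟩ := exists_nat_ge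
    (max (max (2*(ε*(2^q+1))*K) ((2*K*(C*(2^r+1)))^2)) (max (X₀ + 1) 2))
  set m : ℝ := (M : ℝ) with hm
  have hM1 : 2*(ε*(2^q+1))*K ≤ m := le_trans (le_trans (le_max_left _ _) (le_max_left _ _)) hM
  have hM2 : (2*K*(C*(2^r+1)))^2 ≤ m :=
    le_trans (le_trans (le_max_right _ _) (le_max_left _ _)) hM
  have hM3 : X₀ + 1 ≤ m := le_trans (le_trans (le_max_left _ _) (le_max_right _ _)) hM
  have hM4 : (2:ℝ) ≤ m := le_trans (le_trans (le_max_right _ _) (le_max_right _ _)) hM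
  have hMn : 2 ≤ M := by rw [hm] at hM4; exact_mod_cast hM4
  have hM0 : (0:ℝ) < m := by linarith
  -- step 1
  have step1 : ∀ N : ℕ, M ≤ N →
      |FF r N - (N:ℝ)^r / K| ≤ ε * (N:ℝ)^q + C * (N:ℝ) ^ ((r:ℝ) - 1/2) := by
    intro N hN
    have hNR : m ≤ (N:ℝ) := by rw [hm]; exact_mod_cast hN
    have hN1 : (1:ℝ) ≤ N := by linarith
    have hNX : X₀ ≤ (N:ℝ) := by linarith
    have hD := hbound N hN1 hNX
    have hH := hCb N hN1
    have hDe : Delta r (N:ℝ) = ((FF r N - (N:ℝ)^r / K : ℝ) : ℂ) - Hr r (N:ℝ) := by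
      simp only [Delta, FF, Nat.floor_natCast, hK]
      push_cast
      ring
    have h3 : (Delta r (N:ℝ)).re = (FF r N - (N:ℝ)^r/K) - (Hr r (N:ℝ)).re := by
      rw [hDe, Complex.sub_re, Complex.ofReal_re]
    have h4 : |FF r N - (N:ℝ)^r/K| ≤ |(Delta r (N:ℝ)).re| + |(Hr r (N:ℝ)).re| := by
      have h5 : FF r N - (N:ℝ)^r/K = (Delta r (N:ℝ)).re + (Hr r (N:ℝ)).re := by
        rw [h3]; ring
      rw [h5]; exact abs_add_le _ _
    have h5 := Complex.abs_re_le_norm (Delta r (N:ℝ))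
    have h6 := Complex.abs_re_le_norm (Hr r (N:ℝ))
    linarith
  -- block sum
  set s : Finset ℕ := Finset.Ico (M+1) (2*M+1) with hsdef
  set S : ℝ := ∑ n ∈ s, G r n with hSdef
  have hS_eq : FF r M + S = FF r (2*M) := by
    simp only [hSdef, hsdef, FF, Finset.range_eq_Ico]
    exact Finset.sum_Ico_consecutive _ (Nat.zero_le _) (by omega)
  have e1 := step1 M (le_refl M)
  rw [← hm] at e1
  have e2 := step1 (2*M) (by omega)
  have c1 : ((2*M : ℕ):ℝ) = 2*m := by rw [hm]; push_cast; ring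
  rw [c1] at e2
  have c2 : (2*m)^r = 2^r * m^r := mul_pow 2 m r
  have c3 : (2*m)^q = 2^q * m^q := mul_pow 2 m q
  have c4 : (2*m) ^ ((r:ℝ) - 1/2) = 2 ^ ((r:ℝ) - 1/2) * m ^ ((r:ℝ) - 1/2) :=
    Real.mul_rpow (by norm_num) (le_of_lt hM0)
  rw [c2, c3, c4] at e2
  have e1' := abs_le.mp e1
  have e2' := abs_le.mp e2
  have h2e : (2:ℝ) ^ ((r:ℝ) - 1/2) ≤ 2^r := by
    have : (2:ℝ) ^ ((r:ℝ) - 1/2) ≤ 2 ^ ((r:ℝ)) :=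
      Real.rpow_le_rpow_of_exponent_le one_le_two (by linarith)
    rwa [Real.rpow_natCast] at this
  have hMq : (0:ℝ) ≤ m^q := by positivity
  have hMe0 : (0:ℝ) ≤ m ^ ((r:ℝ) - 1/2) := Real.rpow_nonneg (le_of_lt hM0) _
  have h7 : C * (2 ^ ((r:ℝ) - 1/2) * m ^ ((r:ℝ) - 1/2)) ≤ C * (2^r * m ^ ((r:ℝ) - 1/2)) :=
    mul_le_mul_of_nonneg_left (mul_le_mul_of_nonneg_right h2e hMe0) hC0
  -- error bounds
  have hA' : ε*(2^q*m^q) + ε*m^q ≤ m^r/(2*K) := by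
    have hAm : ε*(2^q+1) ≤ m/(2*K) := (le_div_iff₀ (by positivity)).mpr (by linarith)
    have h8 : ε*(2^q*m^q) + ε*m^q = (ε*(2^q+1))*m^q := by ring
    have h9 : (ε*(2^q+1))*m^q ≤ (m/(2*K))*m^q := mul_le_mul_of_nonneg_right hAm hMq
    have h10 : (m/(2*K))*m^q = m^r/(2*K) := by rw [hq, pow_succ]; ring
    linarith
  have hB' : C*(2^r*m ^ ((r:ℝ) - 1/2)) + C*m ^ ((r:ℝ) - 1/2) ≤ m^r/(2*K) := by
    have hsq : 2*K*(C*(2^r+1)) ≤ Real.sqrt m := by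
      have := Real.sqrt_le_sqrt hM2
      rwa [Real.sqrt_sq (by positivity)] at this
    have hBle : C*(2^r+1) ≤ Real.sqrt m/(2*K) := (le_div_iff₀ (by positivity)).mpr (by linarith)
    have hme : m ^ ((r:ℝ) - 1/2) * Real.sqrt m = m^r := by
      rw [Real.sqrt_eq_rpow, ← Real.rpow_add hM0]
      norm_num [Real.rpow_natCast]
    have h8 : C*(2^r*m ^ ((r:ℝ) - 1/2)) + C*m ^ ((r:ℝ) - 1/2) = (C*(2^r+1))*m ^ ((r:ℝ) - 1/2) := by
      ring
    have h9 : (C*(2^r+1))*m ^ ((r:ℝ) - 1/2) ≤ (Real.sqrt m/(2*K))*m ^ ((r:ℝ) - 1/2) :=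
      mul_le_mul_of_nonneg_right hBle hMe0
    have h10 : (Real.sqrt m/(2*K))*m ^ ((r:ℝ) - 1/2) = m^r/(2*K) := by
      rw [← hme]; ring
    linarith
  have hhalf : m^r/(2*K) + m^r/(2*K) = m^r/K := by
    field_simp
    ring
  have t1 : 2^r*m^r/K - (ε*(2^q*m^q) + C*(2 ^ ((r:ℝ) - 1/2) * m ^ ((r:ℝ) - 1/2))) ≤ FF r (2*M) := by
    linarith [e2'.1]
  have t2 : FF r M ≤ m^r/K + (ε*m^q + C*m ^ ((r:ℝ) - 1/2)) := by linarith [e1'.2]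
  have hSlow : (2^r - 2) * m^r / K ≤ S := by
    ring_nf at t1 t2 hS_eq h7 hA' hB' hhalf ⊢
    linarith only [t1, t2, hS_eq, h7, hA', hB', hhalf]
  -- averaging
  have hcard : s.card = M := by rw [hsdef, Nat.card_Ico]; omega
  have hne : s.Nonempty := ⟨M+1, by rw [hsdef]; simp [Finset.mem_Ico]; omega⟩
  have hex : ∃ n ∈ s, (2^r - 2)*m^q/K ≤ G r n := by
    by_contra hno
    push_neg at hno
    have hlt := Finset.sum_lt_sum_of_nonempty hne hno
    rw [Finset.sum_const, hcard, nsmul_eq_mul] at hlt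
    have h11 : (M:ℝ) * ((2^r - 2)*m^q/K) = (2^r - 2)*m^r/K := by
      rw [hq, pow_succ, ← hm]; ring
    rw [h11] at hlt
    rw [← hSdef] at hlt
    exact absurd hSlow (not_le.mpr hlt)
  obtain ⟨n, hns, hGn⟩ := hex
  rw [hsdef, Finset.mem_Ico] at hns
  have hn1 : M + 1 ≤ n := hns.1
  have hn2 : n ≤ 2*M := by omega
  have hnn1 : m + 1 ≤ (n:ℝ) := by rw [hm]; exact_mod_cast hn1
  have hnn2 : (n:ℝ) ≤ 2*m := by rw [hm]; exact_mod_cast hn2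
  -- step 5 : G r n ≥ n^q / K
  have hGlow : (n:ℝ)^q/K ≤ G r n := by
    have hp1 : (n:ℝ)^q ≤ (2*m)^q := pow_le_pow_left₀ (by linarith) (by linarith) q
    have hp2 : (2:ℝ)^q ≤ 2^r - 2 := by
      have h2q : (2:ℝ) ≤ 2^q := by
        calc (2:ℝ) = 2^1 := (pow_one 2).symm
          _ ≤ 2^q := pow_le_pow_right₀ one_le_two hq1
      have hrr : (2:ℝ)^r = 2^q * 2 := by rw [hq, pow_succ]
      rw [hrr]; ring_nf; ring_nf at h2q; linarith only [h2q]
    have hp3 : (n:ℝ)^q ≤ (2^r - 2)*m^q := by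
      rw [c3] at hp1
      exact hp1.trans (mul_le_mul_of_nonneg_right hp2 hMq)
    calc (n:ℝ)^q/K = (n:ℝ)^q * K⁻¹ := div_eq_mul_inv _ _
      _ ≤ ((2^r - 2)*m^q) * K⁻¹ := mul_le_mul_of_nonneg_right hp3 (inv_nonneg.mpr hK0.le)
      _ = (2^r - 2)*m^q/K := (div_eq_mul_inv _ _).symm
      _ ≤ G r n := hGn
  -- step 6 : the jump at n
  have hn2ℕ : 2 ≤ n := by omega
  have hmemIoc : (n:ℝ) ∈ Set.Ioc ((n:ℝ) - 1) (n:ℝ) := ⟨sub_lt_self _ one_pos, le_refl _⟩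
  have hev1 : (fun _ : ℝ => ((FF r (n-1) : ℝ) : ℂ)) =ᶠ[𝓝[<] (n:ℝ)]
      (fun x : ℝ => ∑ k ∈ Finset.range (⌊x⌋₊ + 1), (G r k : ℂ)) := by
    filter_upwards [Ioo_mem_nhdsLT_of_mem hmemIoc] with x hx
    have hx0 : (0:ℝ) ≤ x := by linarith only [hx.1, hnn1, hM4]
    have hfl : ⌊x⌋₊ = n - 1 := by
      rw [Nat.floor_eq_iff hx0]
      have hc : ((n-1:ℕ):ℝ) = (n:ℝ) - 1 := by
        rw [Nat.cast_sub (by omega)]; norm_num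
      constructor
      · rw [hc]; exact hx.1.le
      · rw [hc]; linarith only [hx.2]
    rw [hfl]
    simp only [FF]
    push_cast
    ring
  have T1 : Tendsto (fun x : ℝ => ∑ k ∈ Finset.range (⌊x⌋₊ + 1), (G r k : ℂ)) (𝓝[<] (n:ℝ))
      (𝓝 ((FF r (n-1) : ℝ) : ℂ)) := tendsto_const_nhds.congr' hev1
  have T2 : Tendsto (fun x : ℝ => ((x:ℂ))^r / (r.factorial : ℂ)) (𝓝[<] (n:ℝ))
      (𝓝 (((n:ℝ):ℂ)^r / (r.factorial : ℂ))) :=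
    (((Complex.continuous_ofReal.pow r).div_const _).tendsto ((n:ℝ))).mono_left
      nhdsWithin_le_nhds
  have T3 : Tendsto (Hr r) (𝓝[<] (n:ℝ)) (𝓝 (Hr r (n:ℝ))) := hCt n hn2ℕ
  have hT : Tendsto (Delta r) (𝓝[<] (n:ℝ))
      (𝓝 (((FF r (n-1) : ℝ) : ℂ) - ((n:ℝ):ℂ)^r / (r.factorial : ℂ) - Hr r (n:ℝ))) :=
    (T1.sub T2).sub T3
  set L : ℂ := ((FF r (n-1) : ℝ) : ℂ) - ((n:ℝ):ℂ)^r / (r.factorial : ℂ) - Hr r (n:ℝ) with hLdef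
  have habs : ∀ᶠ x in 𝓝[<] (n:ℝ), ‖Delta r x‖ ≤ ε * (n:ℝ)^q := by
    filter_upwards [Ioo_mem_nhdsLT_of_mem hmemIoc] with x hx
    have h1x : (1:ℝ) ≤ x := by linarith only [hx.1, hnn1, hM4]
    have hXx : X₀ ≤ x := by linarith only [hx.1, hnn1, hM3]
    calc ‖Delta r x‖ ≤ ε * x^q := hbound x h1x hXx
      _ ≤ ε * (n:ℝ)^q := mul_le_mul_of_nonneg_left
          (pow_le_pow_left₀ (by linarith only [hx.1, hnn1, hM4]) hx.2.le q) hε0.le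
  have hLa : ‖L‖ ≤ ε * (n:ℝ)^q :=
    le_of_tendsto (continuous_norm.continuousAt.tendsto.comp hT) habs
  have hΔn : ‖Delta r (n:ℝ)‖ ≤ ε * (n:ℝ)^q :=
    hbound (n:ℝ) (by linarith only [hnn1, hM4]) (by linarith only [hnn1, hM3])
  have hdiff : Delta r (n:ℝ) - L = ((G r n : ℝ) : ℂ) := by
    have hfln : ⌊(n:ℝ)⌋₊ = n := Nat.floor_natCast n
    have hrange : n - 1 + 1 = n := by omega
    rw [hLdef]
    simp only [Delta, hfln, FF, hrange]
    push_cast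
    rw [Finset.sum_range_succ]
    ring
  have hGa : (G r n : ℝ) ≤ 2 * (ε * (n:ℝ)^q) := by
    have habs2 : ‖((G r n : ℝ) : ℂ)‖
        ≤ ‖Delta r (n:ℝ)‖ + ‖L‖ := by
      rw [← hdiff]
      simpa using norm_sub_le (Delta r (n:ℝ)) L
    rw [Complex.norm_real, Real.norm_eq_abs, _root_.abs_of_nonneg (G_nonneg r n)] at habs2
    linarith only [habs2, hΔn, hLa]
  -- final contradiction
  have hnnq : (0:ℝ) < (n:ℝ)^q := pow_pos (by linarith only [hnn1, hM4]) q
  have hfin : (n:ℝ)^q / K ≤ (n:ℝ)^q / (2*K) := by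
    calc (n:ℝ)^q/K ≤ G r n := hGlow
      _ ≤ 2*(ε*(n:ℝ)^q) := hGa
      _ = (n:ℝ)^q/(2*K) := by rw [hε, one_div, div_eq_mul_inv, mul_inv, mul_inv]; ring
  have hcontra := (div_le_div_iff₀ hK0 (by positivity)).mp hfin
  have hlast : (n:ℝ)^q * K < (n:ℝ)^q * (2*K) :=
    mul_lt_mul_of_pos_left (by linarith only [hK0]) hnnq
  exact absurd hcontra (not_le.mpr hlast)
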